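/- arXiv:1310.7042 — 2 statements merged into one kernel-verified Lean document; each statement's English description precedes it below -/
import Mathlib

section
/- Let x₁, ..., x_N ∈ ℝ² be non-collinear with consecutive points distinct, y* ∈ ℝ², dᵢ = ‖y* - xᵢ‖, eᵢ = x_{i+1} - xᵢ, aᵢ = (‖eᵢ‖² + dᵢ² - d_{i+1}²)/(2‖eᵢ‖), yᵢ = xᵢ + aᵢ eᵢ/‖eᵢ‖, and J(y) = (1/2) Σ_{i=1}^{N-1} (⟨y - yᵢ, eᵢ⟩)². Then J(y) = 0 if and only if y = y*. -/
open RealInnerProductSpace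

/-- For non-collinear sensors with consecutive positions distinct and noise-free measurements,
the radical-axis cost `J` vanishes exactly at the true source position `y*`. -/
theorem cost_eq_zero_iff (N : ℕ) (hN : 3 ≤ N)
    (x : ℕ → EuclideanSpace ℝ (Fin 2))
    (hnc : ¬ Collinear ℝ (x '' Set.Iio N))
    (hcons : ∀ i, i + 1 < N → x i ≠ x (i + 1))
    (ystar : EuclideanSpace ℝ (Fin 2)) (d : ℕ → ℝ)
    (hd : ∀ i, i < N → d i = ‖ystar - x i‖)
    (e : ℕ → EuclideanSpace ℝ (Fin 2)) (he : ∀ i, e i = x (i + 1) - x i)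
    (a : ℕ → ℝ) (ha : ∀ i, a i = (‖e i‖ ^ 2 + (d i) ^ 2 - (d (i + 1)) ^ 2) / (2 * ‖e i‖))
    (Y : ℕ → EuclideanSpace ℝ (Fin 2)) (hY : ∀ i, Y i = x i + (a i / ‖e i‖) • e i)
    (J : EuclideanSpace ℝ (Fin 2) → ℝ)
    (hJ : ∀ y, J y = (1 / 2 : ℝ) * ∑ i ∈ Finset.range (N - 1), ⟪y - Y i, e i⟫ ^ 2) :
    ∀ y, J y = 0 ↔ y = ystar := by
  -- key fact: the true source lies on every radical axis
  have key : ∀ i, i + 1 < N → ⟪ystar - Y i, e i⟫ = 0 := by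
    intro i hi
    have hne : e i ≠ 0 := by
      rw [he i, sub_ne_zero]
      exact (hcons i hi).symm
    have hnorm : ‖e i‖ ≠ 0 := norm_ne_zero_iff.mpr hne
    have hdi : d i = ‖ystar - x i‖ := hd i (by omega)
    have hdi1 : d (i + 1) = ‖ystar - x (i + 1)‖ := hd (i + 1) hi
    have hsub : ystar - x (i + 1) = (ystar - x i) - e i := by
      rw [he i]; abel
    have hsq : d (i + 1) ^ 2 = d i ^ 2 - 2 * ⟪ystar - x i, e i⟫ + ‖e i‖ ^ 2 := by
      rw [hdi1, hsub, hdi, @norm_sub_sq_real]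
    have hinner : ⟪ystar - x i, e i⟫ = (‖e i‖ ^ 2 + d i ^ 2 - d (i + 1) ^ 2) / 2 := by
      linarith
    have : ystar - Y i = (ystar - x i) - (a i / ‖e i‖) • e i := by
      rw [hY i]; abel
    rw [this, inner_sub_left, real_inner_smul_left, real_inner_self_eq_norm_sq,
      hinner, ha i]
    field_simp
    ring
  intro y
  rw [hJ y]
  constructor
  · intro h0
    have hsum : ∑ i ∈ Finset.range (N - 1), ⟪y - Y i, e i⟫ ^ 2 = 0 := by linarith
    have hterm : ∀ i ∈ Finset.range (N - 1), ⟪y - Y i, e i⟫ ^ 2 = 0 :=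
      (Finset.sum_eq_zero_iff_of_nonneg fun i _ => sq_nonneg _).mp hsum
    have hperp : ∀ i, i + 1 < N → ⟪y - ystar, e i⟫ = 0 := by
      intro i hi
      have h1 : ⟪y - Y i, e i⟫ = 0 :=
        pow_eq_zero_iff (n := 2) (by norm_num) |>.mp
          (hterm i (Finset.mem_range.mpr (by omega)))
      have h2 := key i hi
      have : y - ystar = (y - Y i) - (ystar - Y i) := by abel
      rw [this, inner_sub_left, h1, h2, sub_zero]
    by_contra hne
    have hv : y - ystar ≠ 0 := sub_ne_zero.mpr hne
    -- all e i lie in the orthogonal complement of v, which is one-dimensional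
    set v := y - ystar with hvdef
    haveI : Fact (Module.finrank ℝ (EuclideanSpace ℝ (Fin 2)) = 1 + 1) :=
      ⟨by simp⟩
    have hrank : Module.finrank ℝ ((ℝ ∙ v)ᗮ : Submodule ℝ (EuclideanSpace ℝ (Fin 2))) = 1 :=
      Submodule.finrank_orthogonal_span_singleton hv
    obtain ⟨w, -, hw⟩ := finrank_eq_one_iff'.mp hrank
    have hmem : ∀ i, i + 1 < N → e i ∈ (ℝ ∙ v)ᗮ := by
      intro i hi
      rw [Submodule.mem_orthogonal_singleton_iff_inner_right]
      exact hperp i hi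
    -- telescoping: x i - x 0 ∈ (ℝ ∙ v)ᗮ
    have hx : ∀ i, i < N → x i - x 0 ∈ (ℝ ∙ v)ᗮ := by
      intro i
      induction i with
      | zero => intro _; simp
      | succ n ih =>
        intro hn
        have h1 : x (n + 1) - x 0 = (x n - x 0) + e n := by rw [he n]; abel
        rw [h1]
        exact Submodule.add_mem _ (ih (by omega)) (hmem n hn)
    apply hnc
    rw [collinear_iff_exists_forall_eq_smul_vadd]
    refine ⟨x 0, (w : EuclideanSpace ℝ (Fin 2)), ?_⟩
    rintro p ⟨i, hi, rfl⟩
    obtain ⟨c, hc⟩ := hw ⟨x i - x 0, hx i hi⟩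
    refine ⟨c, ?_⟩
    have : c • (w : EuclideanSpace ℝ (Fin 2)) = x i - x 0 := by
      have := congrArg (Subtype.val) hc
      simpa using this
    simp [vadd_eq_add, this]
  · intro hy
    rw [hy]
    have h0 : ∀ i ∈ Finset.range (N - 1), ⟪ystar - Y i, e i⟫ ^ 2 = 0 := by
      intro i hi
      rw [key i (by have := Finset.mem_range.mp hi; omega)]
      ring
    rw [Finset.sum_eq_zero h0, mul_zero]
end

section
/- Let x₁, ..., x_N ∈ ℝ² be non-collinear with consecutive points distinct, and let J be the radical-axis cost function for noise-free measurements dᵢ = ‖y* - xᵢ‖. Then J is strictly convex on ℝ², and y* is its unique global minimizer. -/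
open RealInnerProductSpace

/-- In `ℝ²`, any vector orthogonal to a nonzero vector `v` is a multiple of `(-v 1, v 0)`. -/
lemma perp_two (v u : EuclideanSpace ℝ (Fin 2)) (hv : v ≠ 0)
    (h : ⟪v, u⟫ = 0) :
    ∃ t : ℝ, u = t • ((WithLp.equiv 2 (Fin 2 → ℝ)).symm ![-(v 1), v 0]) := by
  have hsum : v 0 * u 0 + v 1 * u 1 = 0 := by
    have h2 := h
    simp [PiLp.inner_apply, RCLike.inner_apply, Fin.sum_univ_two] at h2
    linarith
  have hv01 : v 0 ≠ 0 ∨ v 1 ≠ 0 := by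
    by_contra hcon
    push_neg at hcon
    apply hv
    ext i
    fin_cases i
    · exact hcon.1
    · exact hcon.2
  rcases hv01 with hv0 | hv1
  · refine ⟨u 1 / v 0, ?_⟩
    ext j
    fin_cases j <;>
      simp [PiLp.smul_apply, WithLp.equiv_symm_apply] <;>
      field_simp <;> nlinarith [hsum]
  · by_cases hv0 : v 0 = 0
    · refine ⟨-(u 0) / v 1, ?_⟩
      have hu1 : u 1 = 0 := by
        have : v 1 * u 1 = 0 := by rw [hv0] at hsum; linarith
        rcases mul_eq_zero.mp this with h' | h'
        · exact absurd h' hv1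
        · exact h'
      ext j
      fin_cases j <;>
        simp [PiLp.smul_apply, WithLp.equiv_symm_apply, hv0, hu1] <;>
        field_simp
    · refine ⟨u 1 / v 0, ?_⟩
      ext j
      fin_cases j <;>
        simp [PiLp.smul_apply, WithLp.equiv_symm_apply] <;>
        field_simp <;> nlinarith [hsum]

/-- For non-collinear sensors with consecutive positions distinct and noise-free measurements,
the radical-axis cost `J` is strictly convex and `y*` is its unique global minimizer. -/
theorem cost_strictConvex_and_unique_minimizer (N : ℕ) (hN : 3 ≤ N)
    (x : ℕ → EuclideanSpace ℝ (Fin 2))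
    (hnc : ¬ Collinear ℝ (x '' Set.Iio N))
    (hcons : ∀ i, i + 1 < N → x i ≠ x (i + 1))
    (ystar : EuclideanSpace ℝ (Fin 2)) (d : ℕ → ℝ)
    (hd : ∀ i, i < N → d i = ‖ystar - x i‖)
    (e : ℕ → EuclideanSpace ℝ (Fin 2)) (he : ∀ i, e i = x (i + 1) - x i)
    (a : ℕ → ℝ) (ha : ∀ i, a i = (‖e i‖ ^ 2 + (d i) ^ 2 - (d (i + 1)) ^ 2) / (2 * ‖e i‖))
    (Y : ℕ → EuclideanSpace ℝ (Fin 2)) (hY : ∀ i, Y i = x i + (a i / ‖e i‖) • e i)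
    (J : EuclideanSpace ℝ (Fin 2) → ℝ)
    (hJ : ∀ y, J y = (1 / 2 : ℝ) * ∑ i ∈ Finset.range (N - 1), ⟪y - Y i, e i⟫ ^ 2) :
    StrictConvexOn ℝ Set.univ J ∧ ∀ y, y ≠ ystar → J ystar < J y := by
  -- consecutive edges are nonzero
  have hEne : ∀ i, i < N - 1 → e i ≠ 0 := by
    intro i hi hcon
    rw [he, sub_eq_zero] at hcon
    exact hcons i (by omega) hcon.symm
  -- the key orthogonality: ystar lies on every radical axis
  have key : ∀ i, i < N - 1 → ⟪ystar - Y i, e i⟫ = 0 := by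
    intro i hi
    have hne := hEne i hi
    have hnorm : ‖e i‖ ≠ 0 := norm_ne_zero_iff.mpr hne
    have hnpos : (0:ℝ) < ‖e i‖ := norm_pos_iff.mpr hne
    have hdi : d i = ‖ystar - x i‖ := hd i (by omega)
    have hdi1 : d (i+1) = ‖ystar - x (i+1)‖ := hd (i+1) (by omega)
    have hx1 : ystar - x (i+1) = (ystar - x i) - e i := by rw [he]; abel
    have hsq : d (i+1) ^ 2 = d i ^ 2 - 2 * ⟪ystar - x i, e i⟫ + ‖e i‖ ^ 2 := by
      rw [hdi, hdi1, hx1, norm_sub_sq_real, ← hdi]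
    have hnum : ‖e i‖ ^ 2 + d i ^ 2 - d (i + 1) ^ 2 = 2 * ⟪ystar - x i, e i⟫ := by
      linarith [hsq]
    have hai : a i * ‖e i‖ = ⟪ystar - x i, e i⟫ := by
      rw [ha, hnum]
      field_simp
    have hsplit : ystar - Y i = (ystar - x i) - (a i / ‖e i‖) • e i := by
      rw [hY]; abel
    rw [hsplit, inner_sub_left, real_inner_smul_left, real_inner_self_eq_norm_sq]
    rw [div_mul_eq_mul_div, ← hai]
    field_simp
    ring
  -- rewrite J in centered form
  have hinner : ∀ y : EuclideanSpace ℝ (Fin 2), ∀ i, i < N - 1 →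
      ⟪y - Y i, e i⟫ = ⟪y - ystar, e i⟫ := by
    intro y i hi
    have hs : y - Y i = (y - ystar) + (ystar - Y i) := by abel
    rw [hs, inner_add_left, key i hi, add_zero]
  have Jeq : ∀ y, J y = (1 / 2 : ℝ) * ∑ i ∈ Finset.range (N - 1), ⟪y - ystar, e i⟫ ^ 2 := by
    intro y
    rw [hJ]
    congr 1
    refine Finset.sum_congr rfl fun i hi => ?_
    rw [hinner y i (Finset.mem_range.mp hi)]
  -- spanning: no nonzero vector is orthogonal to all edges
  have hspan : ∀ v : EuclideanSpace ℝ (Fin 2), v ≠ 0 →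
      ∃ i, i < N - 1 ∧ ⟪v, e i⟫ ≠ 0 := by
    intro v hv
    by_contra hcon
    push_neg at hcon
    apply hnc
    have h0 : x 0 ∈ x '' Set.Iio N := ⟨0, Set.mem_Iio.mpr (by omega), rfl⟩
    rw [collinear_iff_of_mem h0]
    refine ⟨(WithLp.equiv 2 (Fin 2 → ℝ)).symm ![-(v 1), v 0], ?_⟩
    rintro p ⟨j, hj, rfl⟩
    have hjN : j < N := Set.mem_Iio.mp hj
    have hsum : ∑ i ∈ Finset.range j, e i = x j - x 0 := by
      simp_rw [he]
      exact Finset.sum_range_sub x j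
    have horth : ⟪v, x j - x 0⟫ = 0 := by
      rw [← hsum, inner_sum]
      refine Finset.sum_eq_zero fun i hi => ?_
      exact hcon i (by have := Finset.mem_range.mp hi; omega)
    obtain ⟨t, ht⟩ := perp_two v (x j - x 0) hv horth
    exact ⟨t, by rw [← ht, vadd_eq_add, sub_add_cancel]⟩
  -- main termwise facts
  have hexpand : ∀ (y z : EuclideanSpace ℝ (Fin 2)) (t s : ℝ), t + s = 1 → ∀ i,
      ⟪t • y + s • z - ystar, e i⟫ = t * ⟪y - ystar, e i⟫ + s * ⟪z - ystar, e i⟫ := by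
    intro y z t s hts i
    have h1 : t • y + s • z - ystar = t • (y - ystar) + s • (z - ystar) := by
      have h2 : (t + s) • ystar = ystar := by rw [hts, one_smul]
      calc t • y + s • z - ystar = t • y + s • z - (t + s) • ystar := by rw [h2]
        _ = t • (y - ystar) + s • (z - ystar) := by
            simp [smul_sub, add_smul]; abel
    rw [h1, inner_add_left, real_inner_smul_left, real_inner_smul_left]
  constructor
  · refine ⟨convex_univ, ?_⟩
    intro y _ z _ hyz t s ht hs hts
    obtain ⟨i0, hi0, hne0⟩ := hspan (y - z) (sub_ne_zero.mpr hyz)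
    have hαβ : ⟪y - ystar, e i0⟫ - ⟪z - ystar, e i0⟫ ≠ 0 := by
      rw [← inner_sub_left]
      have : y - ystar - (z - ystar) = y - z := by abel
      rw [this]
      exact hne0
    rw [Jeq, Jeq, Jeq]
    have hRHS : t * ((1 / 2 : ℝ) * ∑ i ∈ Finset.range (N - 1), ⟪y - ystar, e i⟫ ^ 2)
        + s * ((1 / 2 : ℝ) * ∑ i ∈ Finset.range (N - 1), ⟪z - ystar, e i⟫ ^ 2)
        = (1 / 2 : ℝ) * ∑ i ∈ Finset.range (N - 1),
            (t * ⟪y - ystar, e i⟫ ^ 2 + s * ⟪z - ystar, e i⟫ ^ 2) := by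
      rw [Finset.sum_add_distrib, ← Finset.mul_sum, ← Finset.mul_sum]
      ring
    simp only [smul_eq_mul]
    rw [hRHS]
    have hhalf : (0:ℝ) < 1 / 2 := by norm_num
    refine mul_lt_mul_of_pos_left ?_ hhalf
    refine Finset.sum_lt_sum (fun i _ => ?_) ⟨i0, Finset.mem_range.mpr hi0, ?_⟩
    · rw [hexpand y z t s hts i]
      have hid : t * ⟪y - ystar, e i⟫ ^ 2 + s * ⟪z - ystar, e i⟫ ^ 2
          - (t * ⟪y - ystar, e i⟫ + s * ⟪z - ystar, e i⟫) ^ 2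
          = t * s * (⟪y - ystar, e i⟫ - ⟪z - ystar, e i⟫) ^ 2 := by
        have hs' : s = 1 - t := by linarith
        rw [hs']; ring
      nlinarith [mul_nonneg (mul_nonneg ht.le hs.le) (sq_nonneg (⟪y - ystar, e i⟫ - ⟪z - ystar, e i⟫))]
    · rw [hexpand y z t s hts i0]
      have hid : t * ⟪y - ystar, e i0⟫ ^ 2 + s * ⟪z - ystar, e i0⟫ ^ 2
          - (t * ⟪y - ystar, e i0⟫ + s * ⟪z - ystar, e i0⟫) ^ 2
          = t * s * (⟪y - ystar, e i0⟫ - ⟪z - ystar, e i0⟫) ^ 2 := by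
        have hs' : s = 1 - t := by linarith
        rw [hs']; ring
      have hpos : 0 < t * s * (⟪y - ystar, e i0⟫ - ⟪z - ystar, e i0⟫) ^ 2 := by
        exact mul_pos (mul_pos ht hs) ((sq_nonneg _).lt_of_ne (Ne.symm (pow_ne_zero 2 hαβ)))
      linarith
  · intro y hy
    rw [Jeq, Jeq]
    have hzero : ∀ i ∈ Finset.range (N - 1), ⟪ystar - ystar, e i⟫ ^ 2 = 0 := by
      intro i _
      simp
    rw [Finset.sum_congr rfl hzero, Finset.sum_const, smul_zero, mul_zero]
    obtain ⟨i0, hi0, hne0⟩ := hspan (y - ystar) (sub_ne_zero.mpr hy)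
    have hsumpos : 0 < ∑ i ∈ Finset.range (N - 1), ⟪y - ystar, e i⟫ ^ 2 := by
      refine Finset.sum_pos' (fun i _ => sq_nonneg _) ⟨i0, Finset.mem_range.mpr hi0, ?_⟩
      exact (sq_nonneg _).lt_of_ne (Ne.symm (pow_ne_zero 2 hne0))
    linarith
end
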